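/- Let G be a finite simple graph on vertex set V with |V| ≥ 2, and let a, b be two distinct vertices. Then G admits a linked order whose first two vertices are a and b if and only if a and b are adjacent and, for every set S of vertices with {a, b} ⊆ S and S ≠ V, there exists a vertex c ∉ S having at least two neighbors in S. -/

import Mathlib

/-- A linked order of a finite simple graph `G` is an enumeration of all vertices
(as a duplicate-free list containing every vertex) such that the first two vertices
are adjacent and every vertex in position `i ≥ 3` (1-indexed; i.e., preceded by at
least two vertices) has at least two neighbors among the preceding vertices. -/
def IsLinkedOrder {V : Type*} [Fintype V] [DecidableEq V]
    (G : SimpleGraph V) [DecidableRel G.Adj] (l : List V) : Prop :=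
  (∀ v : V, v ∈ l) ∧ l.Nodup ∧
  (∀ a b rest, l = a :: b :: rest → G.Adj a b) ∧
  (∀ pre c suf, l = pre ++ c :: suf → 2 ≤ pre.length →
    2 ≤ (pre.toFinset ∩ G.neighborFinset c).card)

/-- The prefix-decomposition condition follows from the indexed condition. -/
lemma take_cond_of_index {V : Type*} [Fintype V] [DecidableEq V]
    (G : SimpleGraph V) [DecidableRel G.Adj] {l : List V}
    (h : ∀ i (hi : i < l.length), 2 ≤ i →
      2 ≤ ((l.take i).toFinset ∩ G.neighborFinset l[i]).card) :
    ∀ pre c suf, l = pre ++ c :: suf → 2 ≤ pre.length →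
      2 ≤ (pre.toFinset ∩ G.neighborFinset c).card := by
  intro pre c suf hl hlen
  have hi : pre.length < l.length := by subst hl; simp
  have h1 : l.take pre.length = pre := by
    subst hl
    simp [List.take_append_of_le_length (le_refl pre.length)]
  have h2 : l[pre.length] = c := by
    subst hl
    rw [List.getElem_append_right (le_refl pre.length)]
    simp
  have := h pre.length hi hlen
  rwa [h1, h2] at this

/-- The indexed condition is preserved by appending a suitable vertex. -/
lemma index_cond_append {V : Type*} [Fintype V] [DecidableEq V]
    (G : SimpleGraph V) [DecidableRel G.Adj] {l : List V} {c : V}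
    (h : ∀ i (hi : i < l.length), 2 ≤ i →
      2 ≤ ((l.take i).toFinset ∩ G.neighborFinset l[i]).card)
    (hc : 2 ≤ (l.toFinset ∩ G.neighborFinset c).card) :
    ∀ i (hi : i < (l ++ [c]).length), 2 ≤ i →
      2 ≤ (((l ++ [c]).take i).toFinset ∩ G.neighborFinset (l ++ [c])[i]).card := by
  intro i hi h2
  have hi' : i ≤ l.length := by simpa using Nat.lt_succ_iff.mp (by simpa using hi)
  rcases lt_or_eq_of_le hi' with hlt | heq
  · have ht : (l ++ [c]).take i = l.take i := List.take_append_of_le_length hlt.le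
    have hg : (l ++ [c])[i] = l[i] := List.getElem_append_left hlt
    rw [ht, hg]
    exact h i hlt h2
  · have ht : (l ++ [c]).take i = l := by rw [heq]; exact List.take_left
    have hg : (l ++ [c])[i] = c := List.getElem_concat_length heq hi
    rw [ht, hg]
    exact hc

/-- The growth lemma: any partial linked list containing `a` and `b` can be
extended to a full linked order, assuming the expansion hypothesis. -/
lemma linked_grow {V : Type*} [Fintype V] [DecidableEq V]
    (G : SimpleGraph V) [DecidableRel G.Adj] {a b : V}
    (H : ∀ S : Finset V, a ∈ S → b ∈ S → S ≠ Finset.univ →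
      ∃ c ∉ S, 2 ≤ (G.neighborFinset c ∩ S).card) :
    ∀ n (l : List V), l.Nodup → a ∈ l → b ∈ l →
    (∀ i (hi : i < l.length), 2 ≤ i →
      2 ≤ ((l.take i).toFinset ∩ G.neighborFinset l[i]).card) →
    Fintype.card V - l.length ≤ n →
    ∃ ext : List V, (∀ v : V, v ∈ l ++ ext) ∧ (l ++ ext).Nodup ∧
      (∀ i (hi : i < (l ++ ext).length), 2 ≤ i →
        2 ≤ (((l ++ ext).take i).toFinset ∩ G.neighborFinset (l ++ ext)[i]).card) := by
  intro n
  induction n with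
  | zero =>
    intro l hnd ha hb hidx hcard
    have hlen : Fintype.card V ≤ l.length := by omega
    have huniv : l.toFinset = Finset.univ := by
      apply Finset.eq_univ_of_card
      have h1 : l.toFinset.card = l.length := List.toFinset_card_of_nodup hnd
      have h2 : l.toFinset.card ≤ Fintype.card V := Finset.card_le_univ _
      omega
    refine ⟨[], ?_⟩
    rw [List.append_nil]
    refine ⟨?_, hnd, hidx⟩
    intro v
    have : v ∈ l.toFinset := by rw [huniv]; exact Finset.mem_univ v
    simpa using List.mem_toFinset.mp this
  | succ n ih =>
    intro l hnd ha hb hidx hcard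
    by_cases huniv : l.toFinset = Finset.univ
    · refine ⟨[], ?_⟩
      rw [List.append_nil]
      refine ⟨?_, hnd, hidx⟩
      intro v
      have : v ∈ l.toFinset := by rw [huniv]; exact Finset.mem_univ v
      simpa using List.mem_toFinset.mp this
    · obtain ⟨c, hcS, hc2⟩ := H l.toFinset (List.mem_toFinset.mpr ha)
        (List.mem_toFinset.mpr hb) huniv
      have hcl : c ∉ l := fun h => hcS (List.mem_toFinset.mpr h)
      have hnd' : (l ++ [c]).Nodup := by
        simp [List.nodup_append, hnd, hcl]; exact fun x hx h => hcl (h ▸ hx)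
      have hidx' := index_cond_append G hidx (by rwa [Finset.inter_comm] at hc2)
      have hcard' : Fintype.card V - (l ++ [c]).length ≤ n := by
        simp only [List.length_append, List.length_singleton]
        omega
      obtain ⟨ext, hmem, hnd'', hidx''⟩ := ih (l ++ [c]) hnd'
        (List.mem_append_left _ ha) (List.mem_append_left _ hb) hidx' hcard'
      refine ⟨c :: ext, ?_, ?_, ?_⟩
      · intro v; have := hmem v; simpa [List.append_assoc] using this
      · simpa [List.append_assoc] using hnd''
      · have heq : l ++ c :: ext = (l ++ [c]) ++ ext := by simp
        rw [heq]; exact hidx''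

/-- `G` admits a linked order starting with distinct vertices `a, b` iff `a` and `b`
are adjacent and every vertex set `S` with `{a,b} ⊆ S ≠ V` admits a vertex outside `S`
with at least two neighbors in `S`. -/
theorem linked_order_from_ab_iff {V : Type*} [Fintype V] [DecidableEq V]
    (G : SimpleGraph V) [DecidableRel G.Adj]
    (hm : 2 ≤ Fintype.card V) (a b : V) (hab : a ≠ b) :
    (∃ rest : List V, IsLinkedOrder G (a :: b :: rest)) ↔
      (G.Adj a b ∧ ∀ S : Finset V, a ∈ S → b ∈ S → S ≠ Finset.univ →
        ∃ c ∉ S, 2 ≤ (G.neighborFinset c ∩ S).card) := by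
  constructor
  · rintro ⟨rest, hmem, hnd, hadj, hpre⟩
    refine ⟨hadj a b rest rfl, ?_⟩
    intro S haS hbS hSne
    classical
    set l : List V := a :: b :: rest with hl
    set p : V → Bool := fun x => decide (x ∈ S) with hp
    have hd : l.dropWhile p ≠ [] := by
      intro hdrop
      apply hSne
      apply Finset.eq_univ_iff_forall.mpr
      intro v
      have hv : p v = true := (List.dropWhile_eq_nil_iff.mp hdrop) v (hmem v)
      simpa [hp] using hv
    set c : V := (l.dropWhile p).head hd with hc
    have hdecomp : l = l.takeWhile p ++ c :: (l.dropWhile p).tail := by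
      conv_lhs => rw [← List.takeWhile_append_dropWhile (p := p) (l := l)]
      rw [List.cons_head_tail hd]
    have hcS : c ∉ S := by
      have := List.head_dropWhile_not p hd
      simpa [hp, hc] using this
    have hlen : 2 ≤ (l.takeWhile p).length := by
      have hpa : p a = true := by simp [hp, haS]
      have hpb : p b = true := by simp [hp, hbS]
      rw [hl]
      rw [List.takeWhile_cons_of_pos hpa, List.takeWhile_cons_of_pos hpb]
      simp
    have hbound := hpre (l.takeWhile p) c (l.dropWhile p).tail hdecomp hlen
    refine ⟨c, hcS, le_trans hbound (Finset.card_le_card ?_)⟩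
    intro x hx
    rw [Finset.mem_inter] at hx ⊢
    refine ⟨hx.2, ?_⟩
    have := List.mem_takeWhile_imp (List.mem_toFinset.mp hx.1)
    simpa [hp] using this
  · rintro ⟨hadj, H⟩
    have hnd2 : ([a, b] : List V).Nodup := by simp [hab]
    have hidx2 : ∀ i (hi : i < ([a, b] : List V).length), 2 ≤ i →
        2 ≤ ((([a, b] : List V).take i).toFinset ∩
          G.neighborFinset ([a, b] : List V)[i]).card := by
      intro i hi h2
      simp at hi
      omega
    obtain ⟨ext, hmem, hnd, hidx⟩ := linked_grow G H (Fintype.card V) [a, b] hnd2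
      (by simp) (by simp) hidx2 (by omega)
    refine ⟨ext, ?_, ?_, ?_, ?_⟩
    · intro v; simpa using hmem v
    · simpa using hnd
    · intro a' b' rest' heq
      obtain ⟨rfl, rfl, _⟩ : a = a' ∧ b = b' ∧ ext = rest' := by
        simpa using heq
      exact hadj
    · have : (a :: b :: ext) = [a, b] ++ ext := by simp
      rw [this]
      exact take_cond_of_index G hidx
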